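/- arXiv:2204.05680 — 2 statements merged into one kernel-verified Lean document; each statement's English description precedes it below -/
import Mathlib

section
/- Let $W_t = \prod_{i=1}^t f_{\theta_i}(X_i)$ be a predictably mixed process built from a family $L_t^\theta = \prod_{i=1}^t f_\theta(X_i)$ of nonnegative processes, with a predictable sequence $(\theta_t)$ such that $\mathrm{Regret}_T := \max_{\theta\in\Theta}\{\log L_T^\theta - \log W_T\}$ satisfies $\mathrm{Regret}_T / T \to 0$ a.s. under a measure $Q$. If there exists $\theta' \in \Theta$ with $Q(\liminf_{T\to\infty} \frac{1}{T}\log L_T^{\theta'} > 0) = 1$, then $Q(\lim_{T\to\infty} \max_{0\le t\le T} W_t = \infty) = 1$; in particular, for any $\alpha \in (0,1]$, the stopping time $\tau = \inf\{t : W_t > 1/\alpha\}$ satisfies $Q(\tau < \infty) = 1$. -/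
open MeasureTheory Filter Set
open scoped ENNReal

/-- Sublinear regret implies asymptotic power one: if the regret of a
predictably mixed wealth process is `o(T)` a.s. and some base process has
strictly positive asymptotic growth rate a.s., then the wealth tends to
infinity a.s. and the induced test eventually rejects with probability one. -/
theorem sublinear_regret_asymptotic_power
    {Ω : Type*} {m0 : MeasurableSpace Ω} {Q : Measure Ω} [IsProbabilityMeasure Q]
    {𝒳 : Type*} {Θ : Type*}
    (X : ℕ → Ω → 𝒳)
    (f : Θ → 𝒳 → ℝ) (hf : ∀ θ x, 0 ≤ f θ x)
    (θseq : ℕ → Ω → Θ)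
    (L : Θ → ℕ → Ω → ℝ)
    (hL : ∀ θ t ω, L θ t ω = ∏ i ∈ Finset.range t, f θ (X (i + 1) ω))
    (W : ℕ → Ω → ℝ)
    (hW : ∀ t ω, W t ω = ∏ i ∈ Finset.range t, f (θseq (i + 1) ω) (X (i + 1) ω))
    (R : ℕ → Ω → ℝ)
    (hR : ∀ (T : ℕ) (ω : Ω) (θ : Θ), Real.log (L θ T ω) - Real.log (W T ω) ≤ R T ω)
    (hRsub : ∀ᵐ ω ∂Q,
      Filter.Tendsto (fun T : ℕ => R T ω / (T : ℝ)) Filter.atTop (nhds 0))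
    (θ' : Θ)
    (hθ' : ∀ᵐ ω ∂Q,
      0 < Filter.liminf (fun T : ℕ => Real.log (L θ' T ω) / (T : ℝ)) Filter.atTop)
    (α : ℝ) (hα : α ∈ Set.Ioc (0 : ℝ) 1)
    (τ : Ω → ℕ∞)
    (hτ : ∀ ω, τ ω = ⨅ (t : ℕ) (_ : 1 / α < W t ω), (t : ℕ∞)) :
    (∀ᵐ ω ∂Q,
      Filter.Tendsto
        (fun T : ℕ =>
          (Finset.range (T + 1)).sup' Finset.nonempty_range_add_one (fun t => W t ω))
        Filter.atTop Filter.atTop) ∧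
    Q {ω | τ ω < ⊤} = 1 := by
  have key : ∀ᵐ ω ∂Q, Tendsto (fun T : ℕ => W T ω) atTop atTop := by
    filter_upwards [hRsub, hθ'] with ω hRω hLω
    set u := fun T : ℕ => Real.log (L θ' T ω) / (T : ℝ) with hu
    have hliminf : liminf u atTop = sSup {a : ℝ | ∀ᶠ T in atTop, a ≤ u T} :=
      Filter.liminf_eq
    have hSne : {a : ℝ | ∀ᶠ T in atTop, a ≤ u T}.Nonempty := by
      by_contra h
      rw [Set.not_nonempty_iff_eq_empty] at h
      rw [hliminf, h, Real.sSup_empty] at hLω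
      exact lt_irrefl 0 hLω
    obtain ⟨a, ha_mem, ha_pos⟩ : ∃ a ∈ {a : ℝ | ∀ᶠ T in atTop, a ≤ u T}, 0 < a := by
      rw [hliminf] at hLω
      exact exists_lt_of_lt_csSup hSne hLω
    have h2 : ∀ᶠ T in atTop, R T ω / (T : ℝ) < a / 2 :=
      hRω.eventually_lt_const (by linarith)
    have hbound : ∀ᶠ T : ℕ in atTop, (a / 2) * (T : ℝ) ≤ W T ω := by
      filter_upwards [ha_mem, h2, eventually_ge_atTop 1] with T hT1 hT2 hT3
      have hTpos : (0 : ℝ) < (T : ℝ) := by exact_mod_cast hT3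
      have hlogL : a * (T : ℝ) ≤ Real.log (L θ' T ω) := (le_div_iff₀ hTpos).mp hT1
      have hRle : R T ω ≤ (a / 2) * (T : ℝ) := le_of_lt ((div_lt_iff₀ hTpos).mp hT2)
      have hlogW : (a / 2) * (T : ℝ) ≤ Real.log (W T ω) := by
        have := hR T ω θ'
        linarith
      have hWnn : 0 ≤ W T ω := by
        rw [hW]
        exact Finset.prod_nonneg fun i _ => hf _ _
      calc (a / 2) * (T : ℝ) ≤ Real.log (W T ω) := hlogW
        _ ≤ W T ω := Real.log_le_self hWnn
    have hmul : Tendsto (fun T : ℕ => (a / 2) * (T : ℝ)) atTop atTop :=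
      (tendsto_natCast_atTop_atTop).const_mul_atTop (by linarith)
    exact tendsto_atTop_mono' atTop hbound hmul
  constructor
  · filter_upwards [key] with ω hω
    exact tendsto_atTop_mono
      (fun T => Finset.le_sup' (fun t => W t ω) (Finset.self_mem_range_succ T)) hω
  · have hae : ∀ᵐ ω ∂Q, τ ω < ⊤ := by
      filter_upwards [key] with ω hω
      obtain ⟨t, ht⟩ := (hω.eventually (eventually_gt_atTop (1 / α))).exists
      rw [hτ]
      exact lt_of_le_of_lt (iInf₂_le t ht) (by simp)
    have hcompl : Q {ω | τ ω < ⊤}ᶜ = 0 := by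
      have := hae
      rw [ae_iff] at this
      simpa [Set.compl_setOf, lt_top_iff_ne_top] using this
    refine le_antisymm prob_le_one ?_
    have h1 : Q Set.univ ≤ Q {ω | τ ω < ⊤} + Q {ω | τ ω < ⊤}ᶜ := by
      rw [← Set.union_compl_self {ω | τ ω < ⊤}]
      exact measure_union_le _ _
    rw [measure_univ, hcompl, add_zero] at h1
    exact h1
end

section
/- Suppose $s$ is convex in its first argument and $m(\lambda_0, x) \in \partial_\lambda s(\lambda_0, x)$ is a subgradient. Then for all $\lambda, \lambda_0$ and all $x_1, \ldots, x_t$ with $s(\lambda_0, x_i) - s(\lambda, x_i) > -1$: $0 < \prod_{i=1}^t (1 + s(\lambda_0, x_i) - s(\lambda, x_i)) \le \prod_{i=1}^t (1 + \langle \lambda_0 - \lambda, m(\lambda_0, x_i)\rangle)$. In particular the identifiable test martingale with $\eta = \lambda_0 - \lambda$ dominates the corresponding elicitable test supermartingale pointwise. -/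
open Set

/-- Identifiable test martingales dominate elicitable test supermartingales:
the subgradient inequality implies the termwise and product inequality. -/
theorem identifiable_dominates_elicitable
    {k : ℕ} {𝒳 : Type*}
    (Λ : Set (EuclideanSpace ℝ (Fin k))) (hΛ : Convex ℝ Λ)
    (s : EuclideanSpace ℝ (Fin k) → 𝒳 → ℝ)
    (hconv : ∀ x : 𝒳, ConvexOn ℝ Λ (fun l => s l x))
    (m : 𝒳 → EuclideanSpace ℝ (Fin k))
    (lam0 : EuclideanSpace ℝ (Fin k)) (hlam0 : lam0 ∈ Λ)
    (hsubgrad : ∀ x : 𝒳, ∀ l ∈ Λ, s lam0 x + (inner ℝ (m x) (l - lam0) : ℝ) ≤ s l x)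
    (l : EuclideanSpace ℝ (Fin k)) (hl : l ∈ Λ)
    (t : ℕ) (x : Fin t → 𝒳)
    (hbd : ∀ i : Fin t, -1 < s lam0 (x i) - s l (x i)) :
    0 < ∏ i : Fin t, (1 + s lam0 (x i) - s l (x i)) ∧
    ∏ i : Fin t, (1 + s lam0 (x i) - s l (x i)) ≤
      ∏ i : Fin t, (1 + (inner ℝ (lam0 - l) (m (x i)) : ℝ)) := by
  have hterm : ∀ i : Fin t, 1 + s lam0 (x i) - s l (x i) ≤
      1 + (inner ℝ (lam0 - l) (m (x i)) : ℝ) := by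
    intro i
    have h := hsubgrad (x i) l hl
    have hinner : (inner ℝ (lam0 - l) (m (x i)) : ℝ) = -(inner ℝ (m (x i)) (l - lam0) : ℝ) := by
      rw [real_inner_comm, ← inner_neg_right, neg_sub]
    rw [hinner]; linarith
  have hpos : ∀ i ∈ Finset.univ, (0:ℝ) < 1 + s lam0 (x i) - s l (x i) := by
    intro i _; have := hbd i; linarith
  constructor
  · exact Finset.prod_pos hpos
  · exact Finset.prod_le_prod (fun i hi => le_of_lt (hpos i hi))
      (fun i _ => hterm i)
end
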